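/- Let n be an odd positive integer and let i be an integer. Then ζ_n^i = μ(γ_n(i)) · Σ_b ζ_n^b, where the sum runs over those b ∈ 𝔹_n with b ≡ i (mod n/γ_n(i)), and μ is the Möbius function. -/

import Mathlib

/-- `nPart n p = p^{v_p(n)}`, the `p`-part of `n`. -/
def nPart (n p : ℕ) : ℕ := p ^ (n.factorization p)

/-- The representative of `x` modulo `m` lying in the interval `(-m/2, m/2]`. -/
def midRep (x : ℤ) (m : ℕ) : ℤ :=
  if 2 * (x % (m : ℤ)) ≤ (m : ℤ) then x % (m : ℤ) else x % (m : ℤ) - (m : ℤ)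

/-- `|x|_m`, the absolute value of the representative of `x` modulo `m` in
`(-m/2, m/2]`. -/
def absRep (x : ℤ) (m : ℕ) : ℤ := |midRep x m|

/-- `γ_n(x)`, the product of the primes `p` dividing `n` with
`|x|_{n_p} < n_p/(2p)`. -/
def gammaFn (n : ℕ) (x : ℤ) : ℕ :=
  ∏ p ∈ n.primeFactors,
    if 2 * (p : ℤ) * absRep x (nPart n p) < (nPart n p : ℤ) then p else 1

/-- The predicate describing membership in `𝔹_n ⊆ ℤ/nℤ`:
`|x|_{n_p} > n_p/(2p)` for every prime `p` dividing `n`. -/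
def inBB (n : ℕ) (b : ZMod n) : Prop :=
  ∀ p ∈ n.primeFactors, (nPart n p : ℤ) < 2 * (p : ℤ) * absRep (b.val : ℤ) (nPart n p)


/-- `𝔹_n` realized as the finset of representatives `b ∈ {0, …, n−1}` with
`|b|_{n_p} > n_p/(2p)` for every prime `p` dividing `n`. -/
def BBFinset (n : ℕ) : Finset ℕ :=
  (Finset.range n).filter
    (fun b => ∀ p ∈ n.primeFactors,
      (nPart n p : ℤ) < 2 * (p : ℤ) * absRep (b : ℤ) (nPart n p))

/-- **Proposition (Base Lemma, key identity).** For odd `n` and any integer `i`,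
`ζ_n^i = μ(γ_n(i)) · Σ_{b ∈ 𝔹_n, b ≡ i (mod n/γ_n(i))} ζ_n^b`. -/
lemma midRep_eq_of {x y : ℤ} {m : ℕ} (hdvd : (m:ℤ) ∣ x - y)
    (h1 : -(m:ℤ) < 2*y) (h2 : 2*y ≤ (m:ℤ)) : midRep x m = y := by
  have hm : 0 < (m:ℤ) := by
    rcases Nat.eq_zero_or_pos m with h | h
    · subst h; simp at h1 h2; omega
    · exact_mod_cast h
  have hxm : x % (m:ℤ) = y % (m:ℤ) := (Int.modEq_iff_dvd.2 hdvd).symm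
  unfold midRep
  rcases le_or_gt 0 y with hy | hy
  · have hy2 : y % (m:ℤ) = y := Int.emod_eq_of_lt hy (by omega)
    rw [hxm, hy2, if_pos (by omega)]
  · have hy2 : y % (m:ℤ) = y + m := by
      have h3 : (y + m) % (m:ℤ) = y + m := Int.emod_eq_of_lt (by omega) (by omega)
      have h4 : (y + (m:ℤ)) % (m:ℤ) = y % m := by
        simpa using Int.add_mul_emod_self_left (a := y) (b := (m:ℤ)) (c := 1)
      rw [← h4, h3]
    rw [hxm, hy2, if_neg (by omega)]
    omega

lemma absRep_eq_of {x y : ℤ} {m : ℕ} (hdvd : (m:ℤ) ∣ x - y)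
    (h1 : -(m:ℤ) < 2*y) (h2 : 2*y ≤ (m:ℤ)) : absRep x m = |y| := by
  rw [absRep, midRep_eq_of hdvd h1 h2]

lemma midRep_spec (x : ℤ) {m : ℕ} (hm : 0 < m) :
    (m:ℤ) ∣ x - midRep x m ∧ -(m:ℤ) < 2 * midRep x m ∧ 2 * midRep x m ≤ (m:ℤ) := by
  have hm' : 0 < (m:ℤ) := by exact_mod_cast hm
  have hr0 : 0 ≤ x % (m:ℤ) := Int.emod_nonneg x (by omega)
  have hr1 : x % (m:ℤ) < m := Int.emod_lt_of_pos x hm'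
  have hdvd : (m:ℤ) ∣ x - x % m := by
    refine ⟨x / m, ?_⟩
    rw [Int.emod_def]; ring
  unfold midRep
  split_ifs with h
  · exact ⟨hdvd, by omega, h⟩
  · refine ⟨?_, by omega, by omega⟩
    have : x - (x % (m:ℤ) - m) = (x - x % m) + m := by ring
    rw [this]
    exact dvd_add hdvd dvd_rfl

lemma midRep_congr {x x' : ℤ} (m : ℕ) (h : (m:ℤ) ∣ x - x') : midRep x m = midRep x' m := by
  have h2 : x % (m:ℤ) = x' % (m:ℤ) := (Int.modEq_iff_dvd.2 h).symm
  unfold midRep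
  rw [h2]

lemma absRep_congr {x x' : ℤ} (m : ℕ) (h : (m:ℤ) ∣ x - x') : absRep x m = absRep x' m := by
  rw [absRep, absRep, midRep_congr m h]

lemma zpow_congr {ζ : ℂ} {n : ℕ} (hζn : ζ ^ n = 1) (hζ0 : ζ ≠ 0) {a b : ℤ}
    (h : (n:ℤ) ∣ a - b) : ζ ^ a = ζ ^ b := by
  obtain ⟨t, ht⟩ := h
  have hab : a = b + n * t := by linarith
  rw [hab, zpow_add₀ hζ0, zpow_mul, zpow_natCast, hζn, one_zpow, mul_one]

def badSet (n : ℕ) (i : ℤ) : Finset ℕ :=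
  n.primeFactors.filter (fun p => 2 * (p:ℤ) * absRep i (nPart n p) < (nPart n p : ℤ))

lemma gammaFn_eq (n : ℕ) (i : ℤ) : gammaFn n i = ∏ p ∈ badSet n i, p := by
  rw [gammaFn, badSet, Finset.prod_filter]

lemma badSet_subset (n : ℕ) (i : ℤ) : badSet n i ⊆ n.primeFactors :=
  Finset.filter_subset _ _

lemma prod_badSet_dvd (n : ℕ) (i : ℤ) : (∏ p ∈ badSet n i, p) ∣ n :=
  dvd_trans (Finset.prod_dvd_prod_of_subset _ _ _ (badSet_subset n i))
    (Nat.prod_primeFactors_dvd n)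

lemma moebius_prod_primes {s : Finset ℕ} (hs : ∀ p ∈ s, p.Prime) :
    ArithmeticFunction.moebius (∏ p ∈ s, p) = (-1) ^ s.card := by
  rw [ArithmeticFunction.IsMultiplicative.map_prod _
    ArithmeticFunction.isMultiplicative_moebius s ?_]
  · rw [Finset.prod_congr rfl (fun p hp => ArithmeticFunction.moebius_apply_prime (hs p hp)),
      Finset.prod_const]
  · intro a ha b hb hab
    exact (Nat.coprime_primes (hs a ha) (hs b hb)).2 hab

lemma nPart_dvd (n p : ℕ) : nPart n p ∣ n := Nat.ordProj_dvd n p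

lemma good_of_not_bad {n p : ℕ} (hodd : Odd n) (hn : 0 < n) (hp : p ∈ n.primeFactors) {i : ℤ}
    (h : ¬ (2 * (p:ℤ) * absRep i (nPart n p) < (nPart n p : ℤ))) :
    (nPart n p : ℤ) < 2 * (p:ℤ) * absRep i (nPart n p) := by
  have hoddm : Odd (nPart n p) := by
    rcases Nat.even_or_odd (nPart n p) with he | ho
    · have h2n : (2:ℕ) ∣ n := dvd_trans he.two_dvd (nPart_dvd n p)
      rw [Nat.odd_iff] at hodd
      omega
    · exact ho
  obtain ⟨t, ht⟩ := hoddm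
  set c : ℤ := (p:ℤ) * absRep i (nPart n p) with hc
  have h2 : 2 * (p:ℤ) * absRep i (nPart n p) = 2 * c := by rw [hc]; ring
  rw [h2] at h ⊢
  have hm : (nPart n p : ℤ) = 2 * t + 1 := by exact_mod_cast congrArg (Nat.cast : ℕ → ℤ) ht
  omega

lemma shift_good {m p r : ℕ} (hp : p.Prime) (hpodd : Odd p) (hmr : m = p * r) (hr : 0 < r)
    {i d : ℤ} (hbad : 2 * (p:ℤ) * absRep i m < (m:ℤ)) (hd : ¬ ((p:ℤ) ∣ d)) :
    (m:ℤ) < 2 * (p:ℤ) * absRep (i + d * (r:ℤ)) m := by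
  have hppos : 0 < p := hp.pos
  have hmpos : 0 < m := by rw [hmr]; positivity
  have hmz : (m:ℤ) = (p:ℤ) * r := by exact_mod_cast congrArg (Nat.cast : ℕ → ℤ) hmr
  obtain ⟨hxd, hx1, hx2⟩ := midRep_spec i hmpos
  set x := midRep i m with hxdef
  obtain ⟨hkd, hk1, hk2⟩ := midRep_spec d hppos
  set k := midRep d p with hkdef
  have hk0 : k ≠ 0 := by
    intro h0
    exact hd (by simpa [h0] using hkd)
  have hpodd' : Odd (p:ℤ) := by exact_mod_cast hpodd
  obtain ⟨s, hs⟩ := hpodd'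
  have hk3 : 2 * |k| ≤ (p:ℤ) - 1 := by
    rcases abs_cases k with ⟨h, _⟩ | ⟨h, _⟩ <;> omega
  have hk4 : 1 ≤ |k| := by
    rcases abs_cases k with ⟨h, _⟩ | ⟨h, _⟩ <;> omega
  have hpz : (0:ℤ) < (p:ℤ) := by exact_mod_cast hppos
  have hA : 2 * |x| ≤ (r:ℤ) - 1 := by
    have h7 : (p:ℤ) * (2 * |x|) < (p:ℤ) * r := by
      rw [show (p:ℤ) * (2 * |x|) = 2 * (p:ℤ) * |x| by ring, ← hmz]
      exact hbad
    have h8 := lt_of_mul_lt_mul_left h7 (le_of_lt hpz)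
    omega
  -- the new representative
  have hdvd2 : (m:ℤ) ∣ (i + d * r) - (x + k * r) := by
    have h1 : (i + d * r) - (x + k * r) = (i - x) + (d - k) * r := by ring
    rw [h1]
    refine dvd_add hxd ?_
    obtain ⟨u, hu⟩ := hkd
    exact ⟨u, by rw [hmz]; linear_combination (r:ℤ) * hu⟩
  have hrz : (0:ℤ) ≤ (r:ℤ) := by positivity
  have habs_mul : |k * (r:ℤ)| = |k| * r := by rw [abs_mul, abs_of_nonneg hrz]
  have hub : |x + k * (r:ℤ)| ≤ |x| + |k| * r := by
    calc |x + k * (r:ℤ)| ≤ |x| + |k * (r:ℤ)| := abs_add_le _ _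
    _ = |x| + |k| * r := by rw [habs_mul]
  have hlb : |k| * (r:ℤ) - |x| ≤ |x + k * r| := by
    have h5 := abs_add_le (x + k * (r:ℤ)) (-x)
    rw [show x + k * (r:ℤ) + -x = k * (r:ℤ) by ring, habs_mul, abs_neg] at h5
    linarith
  have hkrub : 2 * (|k| * (r:ℤ)) ≤ ((p:ℤ) - 1) * r := by
    have := mul_le_mul_of_nonneg_right hk3 hrz
    linarith
  have hkrlb : (r:ℤ) ≤ |k| * r := by
    have := mul_le_mul_of_nonneg_right hk4 hrz
    linarith
  have h6 : 2 * |x + k * (r:ℤ)| ≤ (m:ℤ) - 1 := by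
    have hexp : ((p:ℤ) - 1) * r = (p:ℤ) * r - r := by ring
    linarith
  have hbound1 : 2 * (x + k * (r:ℤ)) ≤ (m:ℤ) := by
    rcases abs_cases (x + k * (r:ℤ)) with ⟨h, _⟩ | ⟨h, _⟩ <;> omega
  have hbound0 : -(m:ℤ) < 2 * (x + k * (r:ℤ)) := by
    rcases abs_cases (x + k * (r:ℤ)) with ⟨h, _⟩ | ⟨h, _⟩ <;> omega
  have habsrep : absRep (i + d * (r:ℤ)) m = |x + k * r| :=
    absRep_eq_of hdvd2 hbound0 hbound1
  rw [habsrep]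
  have hlb2 : (r:ℤ) + 1 ≤ 2 * |x + k * r| := by linarith
  have hfin : (p:ℤ) * ((r:ℤ) + 1) ≤ (p:ℤ) * (2 * |x + k * r|) :=
    mul_le_mul_of_nonneg_left hlb2 (by positivity)
  have hexp2 : (p:ℤ) * ((r:ℤ) + 1) = (p:ℤ) * r + p := by ring
  linarith

lemma key (n : ℕ) (hn : 0 < n) (hodd : Odd n) (ζ : ℂ) (hζ : IsPrimitiveRoot ζ n) :
    ∀ k : ℕ, ∀ i : ℤ, (badSet n i).card = k →
    ζ ^ i = ((ArithmeticFunction.moebius (∏ q ∈ badSet n i, q) : ℤ) : ℂ) *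
      ∑ b ∈ (BBFinset n).filter
          (fun b : ℕ => (b : ℤ) ≡ i [ZMOD ((n / ∏ q ∈ badSet n i, q : ℕ) : ℕ)]),
        ζ ^ (b : ℕ) := by
  have hζ0 : ζ ≠ 0 := hζ.ne_zero hn.ne'
  have hζn : ζ ^ n = 1 := hζ.pow_eq_one
  have hnz : ((n:ℕ):ℤ) ≠ 0 := by exact_mod_cast hn.ne'
  have hnz' : (0:ℤ) < (n:ℤ) := by exact_mod_cast hn
  intro k
  induction k with
  | zero =>
    intro i hcard
    have hempty : badSet n i = ∅ := Finset.card_eq_zero.mp hcard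
    rw [hempty]
    simp only [Finset.prod_empty, Nat.div_one, ArithmeticFunction.moebius_apply_one]
    set j : ℕ := (i % (n:ℤ)).toNat with hjdef
    have hj1 : (j:ℤ) = i % n := Int.toNat_of_nonneg (Int.emod_nonneg i hnz)
    have hj2 : j < n := by
      have h2 := Int.emod_lt_of_pos i hnz'
      omega
    have hdvdij : ((n:ℕ):ℤ) ∣ i - j := ⟨i / n, by rw [hj1, Int.emod_def]; ring⟩
    have hfilter : (BBFinset n).filter (fun b : ℕ => (b:ℤ) ≡ i [ZMOD ((n:ℕ):ℕ)]) = {j} := by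
      ext b
      simp only [Finset.mem_filter, Finset.mem_singleton, BBFinset, Finset.mem_range]
      constructor
      · rintro ⟨⟨hb1, _⟩, hb2⟩
        have hb' : (b:ℤ) % (n:ℤ) = i % n := hb2
        rw [Int.emod_eq_of_lt (by positivity) (by exact_mod_cast hb1)] at hb'
        have hbj : (b:ℤ) = (j:ℤ) := by rw [hb', hj1]
        exact_mod_cast hbj
      · rintro rfl
        refine ⟨⟨hj2, ?_⟩, ?_⟩
        · intro p hp
          have hnp_dvd : ((nPart n p : ℕ):ℤ) ∣ (j:ℤ) - i := by
            have h1 : ((nPart n p : ℕ):ℤ) ∣ ((n:ℕ):ℤ) := Int.natCast_dvd_natCast.2 (nPart_dvd n p)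
            have h2 : ((n:ℕ):ℤ) ∣ (j:ℤ) - i := dvd_sub_comm.mp hdvdij
            exact h1.trans h2
          have habs : absRep (j:ℤ) (nPart n p) = absRep i (nPart n p) :=
            absRep_congr _ hnp_dvd
          rw [habs]
          apply good_of_not_bad hodd hn hp
          intro hbad
          have hmem : p ∈ badSet n i := Finset.mem_filter.2 ⟨hp, hbad⟩
          rw [hempty] at hmem
          exact absurd hmem (Finset.notMem_empty p)
        · show (j:ℤ) % (n:ℤ) = i % n
          rw [hj1, Int.emod_emod_of_dvd _ dvd_rfl]
      
    rw [hfilter, Finset.sum_singleton]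
    have hzp := zpow_congr hζn hζ0 hdvdij
    rw [hzp, zpow_natCast]
    push_cast
    ring
  | succ k ih =>
    intro i hcard
    classical
    obtain ⟨p, hp⟩ := Finset.card_pos.mp (by omega : 0 < (badSet n i).card)
    have hpF : p ∈ n.primeFactors := badSet_subset n i hp
    have hpprime : p.Prime := Nat.prime_of_mem_primeFactors hpF
    have hppos : 0 < p := hpprime.pos
    have hp2 : 1 < p := hpprime.one_lt
    have hpdvdn : p ∣ n := Nat.dvd_of_mem_primeFactors hpF
    have hbadp : 2 * (p:ℤ) * absRep i (nPart n p) < (nPart n p : ℤ) :=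
      (Finset.mem_filter.mp hp).2
    have hpodd : Odd p := by
      rcases Nat.even_or_odd p with hev | ho
      · exfalso
        have h2 := dvd_trans hev.two_dvd hpdvdn
        rw [Nat.odd_iff] at hodd
        omega
      · exact ho
    set m := nPart n p with hmdef
    set e := n.factorization p with hedef
    have he1 : 1 ≤ e := hpprime.factorization_pos_of_dvd hn.ne' hpdvdn
    set r := p ^ (e - 1) with hrdef
    have hrpos : 0 < r := pow_pos hppos _
    have hmr : m = p * r := by
      rw [hmdef, nPart, hrdef, ← pow_succ']
      congr 1
      omega
    set c := n / m with hcdef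
    have hmc : m * c = n := Nat.mul_div_cancel' (nPart_dvd n p)
    have hpc : ¬ p ∣ c := Nat.not_dvd_ordCompl hpprime hn.ne'
    set N := n / p with hNdef
    have hpN : p * N = n := Nat.mul_div_cancel' hpdvdn
    have hNrc : N = r * c := by
      have h1 : p * N = p * (r * c) := by rw [hpN, ← hmc, hmr]; ring
      exact Nat.eq_of_mul_eq_mul_left hppos h1
    set γ' := ∏ q ∈ (badSet n i).erase p, q with hγ'def
    have hγ : (∏ q ∈ badSet n i, q) = p * γ' := (Finset.mul_prod_erase _ _ hp).symm
    have hprimes' : ∀ q ∈ (badSet n i).erase p, q.Prime := fun q hq =>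
      Nat.prime_of_mem_primeFactors (badSet_subset n i (Finset.mem_of_mem_erase hq))
    have hpγ' : ¬ p ∣ γ' := by
      intro hdvd
      rw [hγ'def] at hdvd
      obtain ⟨q, hq, hpq⟩ := (Prime.dvd_finset_prod_iff hpprime.prime _).1 hdvd
      have heq : p = q := (Nat.prime_dvd_prime_iff_eq hpprime (hprimes' q hq)).1 hpq
      exact (Finset.mem_erase.mp hq).1 heq.symm
    have hγ'pos : 0 < γ' := by
      rw [hγ'def]
      exact Finset.prod_pos (fun q hq => (hprimes' q hq).pos)
    have hγdvd : (p * γ') ∣ n := hγ ▸ prod_badSet_dvd n i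
    set M := n / (p * γ') with hMdef
    have hγM : (p * γ') * M = n := Nat.mul_div_cancel' hγdvd
    have hγ'M : n / γ' = p * M :=
      Nat.div_eq_of_eq_mul_left hγ'pos (by rw [← hγM]; ring)
    have hMpos : 0 < M := by
      rcases Nat.eq_zero_or_pos M with h0 | h
      · rw [h0, mul_zero] at hγM; omega
      · exact h
    have hNM : N = γ' * M := by
      have h1 : p * N = p * (γ' * M) := by rw [hpN, ← hγM]; ring
      exact Nat.eq_of_mul_eq_mul_left hppos h1
    have hcop : Nat.Coprime r γ' :=
      Nat.Coprime.pow_left _ ((Nat.Prime.coprime_iff_not_dvd hpprime).2 hpγ')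
    have hrM : r ∣ M := by
      have h1 : r * c = γ' * M := by rw [← hNrc, hNM]
      exact Nat.Coprime.dvd_of_dvd_mul_left hcop ⟨c, h1.symm⟩
    have hmpM : m ∣ p * M := by
      rw [hmr]
      exact mul_dvd_mul_left p hrM
    -- badSet of shifted values
    have hshift : ∀ j : ℕ, 1 ≤ j → j < p →
        badSet n (i + (j:ℤ) * (N:ℕ)) = (badSet n i).erase p := by
      intro j hj1 hj2
      ext q
      simp only [badSet, Finset.mem_filter, Finset.mem_erase]
      by_cases hqp : q = p
      · subst hqp
        constructor
        · rintro ⟨hqF, hbadq⟩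
          exfalso
          have hd : ¬ ((q:ℤ) ∣ (j:ℤ) * (c:ℕ)) := by
            intro hdvd
            have hdvd' : q ∣ j * c := by exact_mod_cast hdvd
            rcases (Nat.Prime.dvd_mul hpprime).1 hdvd' with h | h
            · have := Nat.le_of_dvd (by omega) h
              omega
            · exact hpc h
          have hgood := shift_good hpprime hpodd hmr hrpos hbadp hd
          have harg : i + (j:ℤ) * ((N:ℕ):ℤ) = i + ((j:ℤ) * (c:ℕ)) * ((r:ℕ):ℤ) := by
            rw [hNrc]
            push_cast
            ring
          rw [harg, ← hmdef] at hbadq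
          exact lt_asymm hgood hbadq
        · rintro ⟨hne, _⟩
          exact absurd rfl hne
      · have habs : q ∈ n.primeFactors →
            absRep (i + (j:ℤ) * (N:ℕ)) (nPart n q) = absRep i (nPart n q) := by
          intro hqF
          apply absRep_congr
          have hqprime : q.Prime := Nat.prime_of_mem_primeFactors hqF
          have h2 : nPart n q ∣ p * N := hpN ▸ nPart_dvd n q
          have h3 : Nat.Coprime (nPart n q) p :=
            Nat.Coprime.pow_left _ ((Nat.coprime_primes hqprime hpprime).2 hqp)
          have h1 : nPart n q ∣ N := h3.dvd_of_dvd_mul_left h2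
          have h4 : ((nPart n q : ℕ):ℤ) ∣ (j:ℤ) * ((N:ℕ):ℤ) :=
            Dvd.dvd.mul_left (Int.natCast_dvd_natCast.2 h1) _
          simpa using h4
        constructor
        · rintro ⟨hqF, hbadq⟩
          exact ⟨hqp, hqF, by rwa [habs hqF] at hbadq⟩
        · rintro ⟨_, hqF, hbadq⟩
          exact ⟨hqF, by rwa [habs hqF]⟩
    -- geometric sum relation
    have hgeom : ζ ^ i + ∑ j ∈ Finset.Ico 1 p, ζ ^ (i + (j:ℤ) * (N:ℕ)) = 0 := by
      have hξ : IsPrimitiveRoot (ζ ^ (N:ℕ)) p := hζ.pow hn (by rw [← hpN]; ring)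
      have hsum0 : ∑ j ∈ Finset.range p, (ζ ^ (N:ℕ)) ^ j = 0 := hξ.geom_sum_eq_zero hp2
      have hterm : ∀ j : ℕ, ζ ^ (i + (j:ℤ) * (N:ℕ)) = ζ ^ i * (ζ ^ (N:ℕ)) ^ j := by
        intro j
        rw [zpow_add₀ hζ0]
        congr 1
        rw [mul_comm, zpow_mul, zpow_natCast, zpow_natCast]
      have hsplit : ∑ j ∈ Finset.range p, ζ ^ (i + (j:ℤ) * (N:ℕ))
          = ζ ^ (i + ((0:ℕ):ℤ) * (N:ℕ)) + ∑ j ∈ Finset.Ico 1 p, ζ ^ (i + (j:ℤ) * (N:ℕ)) := by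
        rw [Finset.range_eq_Ico, Finset.sum_eq_sum_Ico_succ_bot hppos]
      have h0 : ζ ^ (i + ((0:ℕ):ℤ) * (N:ℕ)) = ζ ^ i := by norm_num
      calc ζ ^ i + ∑ j ∈ Finset.Ico 1 p, ζ ^ (i + (j:ℤ) * (N:ℕ))
          = ∑ j ∈ Finset.range p, ζ ^ (i + (j:ℤ) * (N:ℕ)) := by rw [hsplit, h0]
        _ = ∑ j ∈ Finset.range p, ζ ^ i * (ζ ^ (N:ℕ)) ^ j :=
            Finset.sum_congr rfl (fun j _ => hterm j)
        _ = ζ ^ i * ∑ j ∈ Finset.range p, (ζ ^ (N:ℕ)) ^ j := by rw [Finset.mul_sum]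
        _ = 0 := by rw [hsum0, mul_zero]
    -- apply the induction hypothesis to each shift
    have hIH : ∀ j ∈ Finset.Ico 1 p, ζ ^ (i + (j:ℤ) * (N:ℕ)) =
        ((ArithmeticFunction.moebius γ' : ℤ) : ℂ) *
        ∑ b ∈ (BBFinset n).filter
            (fun b : ℕ => (b:ℤ) ≡ i + (j:ℤ) * (N:ℕ) [ZMOD ((p * M : ℕ) : ℤ)]),
          ζ ^ (b:ℕ) := by
      intro j hj
      obtain ⟨hj1, hj2⟩ := Finset.mem_Ico.mp hj
      have hbs := hshift j hj1 hj2
      have hcard' : (badSet n (i + (j:ℤ) * (N:ℕ))).card = k := by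
        rw [hbs, Finset.card_erase_of_mem hp, hcard, Nat.add_sub_cancel]
      have hthis := ih (i + (j:ℤ) * (N:ℕ)) hcard'
      rw [hbs, ← hγ'def, hγ'M] at hthis
      exact hthis
    haveI : Fact p.Prime := ⟨hpprime⟩
    haveI : NeZero p := ⟨hppos.ne'⟩
    have hγ'z : ((γ' : ℕ) : ZMod p) ≠ 0 := by
      rw [Ne, ZMod.natCast_eq_zero_iff]
      exact hpγ'
    -- partition of the congruence class
    have hcover : (BBFinset n).filter (fun b : ℕ => (b:ℤ) ≡ i [ZMOD ((M:ℕ):ℤ)]) =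
        (Finset.Ico 1 p).biUnion (fun j => (BBFinset n).filter
          (fun b : ℕ => (b:ℤ) ≡ i + (j:ℤ) * (N:ℕ) [ZMOD ((p * M : ℕ) : ℤ)])) := by
      ext b
      simp only [Finset.mem_filter, Finset.mem_biUnion, Finset.mem_Ico]
      constructor
      · rintro ⟨hbB, hbc⟩
        have hdvd : ((M:ℕ):ℤ) ∣ i - (b:ℤ) := hbc.dvd
        obtain ⟨t, ht⟩ := hdvd
        set z : ZMod p := ((-t : ℤ) : ZMod p) * (((γ' : ℕ) : ZMod p))⁻¹ with hz
        set j := z.val with hjdef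
        have hjlt : j < p := ZMod.val_lt z
        have hjz : ((j : ℕ) : ZMod p) = z := ZMod.natCast_zmod_val z
        have hkey : ((t + (j:ℤ) * ((γ':ℕ):ℤ) : ℤ) : ZMod p) = 0 := by
          push_cast
          rw [hjz, hz]
          field_simp
          simp
        have hkey' : (p:ℤ) ∣ t + (j:ℤ) * ((γ':ℕ):ℤ) :=
          (ZMod.intCast_zmod_eq_zero_iff_dvd _ _).1 hkey
        have hj0 : j ≠ 0 := by
          intro h0
          rw [h0] at hkey'
          simp only [Nat.cast_zero, zero_mul, add_zero] at hkey'
          obtain ⟨s, hs⟩ := hkey'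
          have hbm : ((m:ℕ):ℤ) ∣ (b:ℤ) - i := by
            refine dvd_trans (Int.natCast_dvd_natCast.2 hmpM) ⟨-s, ?_⟩
            push_cast
            linear_combination (-1 : ℤ) * ht - (M:ℤ) * hs
          have habs2 : absRep (b:ℤ) m = absRep i m := absRep_congr m hbm
          have hbB2 : ∀ q ∈ n.primeFactors,
              (nPart n q : ℤ) < 2 * (q:ℤ) * absRep (b:ℤ) (nPart n q) := by
            have hmem := hbB
            simp only [BBFinset, Finset.mem_filter, Finset.mem_range] at hmem
            exact hmem.2
          have hgood := hbB2 p hpF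
          rw [← hmdef, habs2] at hgood
          exact lt_asymm hgood hbadp
        refine ⟨j, ⟨by omega, hjlt⟩, hbB, ?_⟩
        obtain ⟨u, hu⟩ := hkey'
        have h1 : (i + (j:ℤ) * (N:ℕ)) - (b:ℤ) = ((p * M : ℕ):ℤ) * u := by
          rw [hNM]
          push_cast
          linear_combination ht + (M:ℤ) * hu
        exact Int.modEq_iff_dvd.2 ⟨u, h1⟩
      · rintro ⟨j, ⟨hj1, hj2⟩, hbB, hbc⟩
        refine ⟨hbB, ?_⟩
        have h2 : (b:ℤ) ≡ i + (j:ℤ) * (N:ℕ) [ZMOD ((M:ℕ):ℤ)] :=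
          hbc.of_dvd (Int.natCast_dvd_natCast.2 (dvd_mul_left M p))
        have h3 : (i + (j:ℤ) * (N:ℕ)) ≡ i [ZMOD ((M:ℕ):ℤ)] := by
          refine Int.modEq_iff_dvd.2 ⟨-((j:ℤ) * ((γ':ℕ):ℤ)), ?_⟩
          rw [hNM]
          push_cast
          ring
        exact h2.trans h3
    -- pairwise disjointness
    have hdisj : Set.PairwiseDisjoint (↑(Finset.Ico 1 p) : Set ℕ)
        (fun j => (BBFinset n).filter
          (fun b : ℕ => (b:ℤ) ≡ i + (j:ℤ) * (N:ℕ) [ZMOD ((p * M : ℕ) : ℤ)])) := by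
      intro j1 hj1 j2 hj2 hne
      have hj1' := Finset.mem_Ico.mp (Finset.mem_coe.mp hj1)
      have hj2' := Finset.mem_Ico.mp (Finset.mem_coe.mp hj2)
      simp only [Function.onFun]
      rw [Finset.disjoint_left]
      rintro b hb1 hb2
      have hc1 := (Finset.mem_filter.mp hb1).2
      have hc2 := (Finset.mem_filter.mp hb2).2
      have h4 : (i + (j1:ℤ) * (N:ℕ)) ≡ i + (j2:ℤ) * (N:ℕ) [ZMOD ((p * M : ℕ):ℤ)] :=
        hc1.symm.trans hc2
      obtain ⟨u, hu⟩ := h4.dvd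
      have hMz : ((M:ℕ):ℤ) ≠ 0 := by exact_mod_cast hMpos.ne'
      have h6 : ((j2:ℤ) - (j1:ℤ)) * ((γ':ℕ):ℤ) = (p:ℤ) * u := by
        apply mul_right_cancel₀ hMz
        rw [hNM] at hu
        push_cast at hu ⊢
        linear_combination hu
      have h8 := (ZMod.intCast_zmod_eq_zero_iff_dvd (((j2:ℤ) - (j1:ℤ)) * ((γ':ℕ):ℤ)) p).2 ⟨u, h6⟩
      push_cast at h8
      rcases mul_eq_zero.mp h8 with h | h
      · have h9 : ((j2:ℕ) : ZMod p) = ((j1:ℕ) : ZMod p) := sub_eq_zero.mp h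
        have v1 := ZMod.val_cast_of_lt hj1'.2
        have v2 := ZMod.val_cast_of_lt hj2'.2
        exact hne (by rw [← v1, ← v2, h9])
      · exact absurd h hγ'z
    -- Möbius values
    have hμ1 : (ArithmeticFunction.moebius (p * γ') : ℤ) = (-1)^(k+1) := by
      rw [← hγ, moebius_prod_primes
        (fun q hq => Nat.prime_of_mem_primeFactors (badSet_subset n i hq)), hcard]
    have hμ2 : (ArithmeticFunction.moebius γ' : ℤ) = (-1)^k := by
      rw [hγ'def, moebius_prod_primes hprimes', Finset.card_erase_of_mem hp, hcard,
        Nat.add_sub_cancel]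
    -- assemble
    rw [hγ, ← hMdef]
    calc ζ ^ i = -(∑ j ∈ Finset.Ico 1 p, ζ ^ (i + (j:ℤ) * (N:ℕ))) :=
          eq_neg_of_add_eq_zero_left hgeom
      _ = -(∑ j ∈ Finset.Ico 1 p, ((ArithmeticFunction.moebius γ' : ℤ) : ℂ) *
            ∑ b ∈ (BBFinset n).filter
              (fun b : ℕ => (b:ℤ) ≡ i + (j:ℤ) * (N:ℕ) [ZMOD ((p * M : ℕ) : ℤ)]),
              ζ ^ (b:ℕ)) := by rw [Finset.sum_congr rfl hIH]
      _ = ((ArithmeticFunction.moebius (p * γ') : ℤ) : ℂ) *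
            ∑ j ∈ Finset.Ico 1 p, ∑ b ∈ (BBFinset n).filter
              (fun b : ℕ => (b:ℤ) ≡ i + (j:ℤ) * (N:ℕ) [ZMOD ((p * M : ℕ) : ℤ)]),
              ζ ^ (b:ℕ) := by
          rw [← Finset.mul_sum]
          have hcoef : ((ArithmeticFunction.moebius (p * γ') : ℤ) : ℂ) =
              -((ArithmeticFunction.moebius γ' : ℤ) : ℂ) := by
            rw [hμ1, hμ2]
            push_cast
            ring
          rw [hcoef]
          ring
      _ = ((ArithmeticFunction.moebius (p * γ') : ℤ) : ℂ) *
            ∑ b ∈ (BBFinset n).filter (fun b : ℕ => (b:ℤ) ≡ i [ZMOD ((M:ℕ):ℤ)]),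
              ζ ^ (b:ℕ) := by
          rw [hcover, Finset.sum_biUnion hdisj]


theorem zeta_pow_eq_moebius_sum (n : ℕ) (hn : 0 < n) (hodd : Odd n) (ζ : ℂ)
    (hζ : IsPrimitiveRoot ζ n) (i : ℤ) :
    ζ ^ i =
      ((ArithmeticFunction.moebius (gammaFn n i) : ℤ) : ℂ) *
        ∑ b ∈ (BBFinset n).filter
            (fun b : ℕ => (b : ℤ) ≡ i [ZMOD ((n / gammaFn n i : ℕ) : ℕ)]),
          ζ ^ (b : ℕ) := by
  rw [show gammaFn n i = ∏ q ∈ badSet n i, q from gammaFn_eq n i]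
  exact key n hn hodd ζ hζ _ i rfl
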